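/- The set 𝓘_ξ(E,μ) of Hilbert–Schmidt operators K on L²(E,μ) satisfying Σₙ ‖χ_{Eₙ}Kχ_{Eₙ}‖_{𝓘₁} < ∞, equipped with the norm ‖K‖_{𝓘_ξ} = ‖K‖_{𝓘₂} + Σₙ ‖χ_{Eₙ}Kχ_{Eₙ}‖_{𝓘₁}, is closed under operator composition (i.e., is an algebra). -/

import Mathlib

open MeasureTheory
open scoped ENNReal

/-- The trace norm of an operator (finite iff the operator is trace class). -/
noncomputable def traceNorm {H : Type*} [NormedAddCommGroup H] [InnerProductSpace ℂ H]
    (T : H →L[ℂ] H) : ℝ≥0∞ :=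
  ⨆ (n : ℕ) (e : Fin n → H) (f : Fin n → H) (_ : Orthonormal ℂ e) (_ : Orthonormal ℂ f),
    ∑ i, (‖(inner ℂ (e i) (T (f i)) : ℂ)‖₊ : ℝ≥0∞)

/-- `T` is a Hilbert–Schmidt operator. -/
def IsHilbertSchmidt {H : Type*} [NormedAddCommGroup H] [InnerProductSpace ℂ H]
    (b : HilbertBasis ℕ ℂ H) (T : H →L[ℂ] H) : Prop :=
  Summable fun i : ℕ => ‖T (b i)‖ ^ 2

/-- Membership in the class `𝓘_ξ(E,μ)`: Hilbert–Schmidt with summable trace norms of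
the diagonal blocks `χ_{Eₙ} T χ_{Eₙ}`. -/
def memIxi {H : Type*} [NormedAddCommGroup H] [InnerProductSpace ℂ H]
    (b : HilbertBasis ℕ ℂ H) (chi : ℕ → (H →L[ℂ] H)) (T : H →L[ℂ] H) : Prop :=
  IsHilbertSchmidt b T ∧ (∑' n : ℕ, traceNorm (chi n ∘L T ∘L chi n)) < ⊤

section Aux

open ContinuousLinearMap
open scoped NNReal

set_option linter.unusedSectionVars false

namespace IxiAux

variable {H : Type*} [NormedAddCommGroup H] [InnerProductSpace ℂ H] [CompleteSpace H]

local notation "⟪" x ", " y "⟫" => @inner ℂ _ _ x y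

noncomputable def sHS (b : HilbertBasis ℕ ℂ H) (A : H →L[ℂ] H) : ℝ≥0∞ :=
  ∑' j, (‖A (b j)‖₊ : ℝ≥0∞) ^ 2

lemma parseval (b : HilbertBasis ℕ ℂ H) (x : H) :
    (‖x‖₊ : ℝ≥0∞) ^ 2 = ∑' i, (‖⟪b i, x⟫‖₊ : ℝ≥0∞) ^ 2 := by
  have h := b.hasSum_inner_mul_inner x x
  have h2 : HasSum (fun i => ((‖⟪b i, x⟫‖ ^ 2 : ℝ) : ℂ)) ((‖x‖ ^ 2 : ℝ) : ℂ) := by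
    have hfun : ∀ i, ⟪x, b i⟫ * ⟪b i, x⟫ = ((‖⟪b i, x⟫‖ ^ 2 : ℝ) : ℂ) := by
      intro i
      rw [← inner_conj_symm x (b i), RCLike.conj_mul]; norm_cast
    have hx : ⟪x, x⟫ = ((‖x‖ ^ 2 : ℝ) : ℂ) := by
      rw [inner_self_eq_norm_sq_to_K]; norm_cast
    rw [← funext hfun, ← hx]
    exact h
  have h3 : HasSum (fun i => (‖⟪b i, x⟫‖ ^ 2 : ℝ)) (‖x‖ ^ 2) :=
    Complex.hasSum_ofReal.mp h2
  have h4 : HasSum (fun i => (‖⟪b i, x⟫‖₊ ^ 2 : ℝ≥0)) (‖x‖₊ ^ 2) := by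
    rw [← NNReal.hasSum_coe]
    simpa only [NNReal.coe_pow, coe_nnnorm] using h3
  rw [← ENNReal.coe_pow, ← ENNReal.tsum_coe_eq h4]
  simp [ENNReal.coe_pow]

lemma bessel (x : H) {m : ℕ} {e : Fin m → H} (he : Orthonormal ℂ e) :
    ∑ i, (‖⟪e i, x⟫‖₊ : ℝ≥0∞) ^ 2 ≤ (‖x‖₊ : ℝ≥0∞) ^ 2 := by
  have h := he.sum_inner_products_le (s := Finset.univ) x
  have h' : ∑ i, (‖⟪e i, x⟫‖₊ ^ 2 : ℝ≥0) ≤ (‖x‖₊ ^ 2 : ℝ≥0) := by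
    rw [← NNReal.coe_le_coe]
    push_cast
    simpa only [coe_nnnorm] using h
  calc ∑ i, ((‖⟪e i, x⟫‖₊ : ℝ≥0∞)) ^ 2
      = ((∑ i, ‖⟪e i, x⟫‖₊ ^ 2 : ℝ≥0) : ℝ≥0∞) := by push_cast; rfl
    _ ≤ ((‖x‖₊ ^ 2 : ℝ≥0) : ℝ≥0∞) := by exact_mod_cast h'
    _ = (‖x‖₊ : ℝ≥0∞) ^ 2 := by push_cast; rfl

lemma sum_sq_le (b : HilbertBasis ℕ ℂ H) (A : H →L[ℂ] H) {m : ℕ} {e : Fin m → H}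
    (he : Orthonormal ℂ e) :
    ∑ i, (‖A (e i)‖₊ : ℝ≥0∞) ^ 2 ≤ sHS b (adjoint A) := by
  have h1 : ∀ i, (‖A (e i)‖₊ : ℝ≥0∞) ^ 2 = ∑' j, (‖⟪e i, adjoint A (b j)⟫‖₊ : ℝ≥0∞) ^ 2 := by
    intro i
    rw [parseval b (A (e i))]
    congr 1
    ext j
    congr 2
    rw [← adjoint_inner_left A (e i) (b j), ← inner_conj_symm (adjoint A (b j)) (e i),
      RCLike.nnnorm_conj]
  calc ∑ i, (‖A (e i)‖₊ : ℝ≥0∞) ^ 2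
      = ∑ i, ∑' j, (‖⟪e i, adjoint A (b j)⟫‖₊ : ℝ≥0∞) ^ 2 := by simp_rw [h1]
    _ = ∑' j, ∑ i, (‖⟪e i, adjoint A (b j)⟫‖₊ : ℝ≥0∞) ^ 2 := by
        simp_rw [← tsum_fintype (L := SummationFilter.unconditional _)]
        exact ENNReal.tsum_comm
    _ ≤ ∑' j, (‖adjoint A (b j)‖₊ : ℝ≥0∞) ^ 2 := ENNReal.tsum_le_tsum fun j => bessel _ he
    _ = sHS b (adjoint A) := rfl


lemma sHS_adjoint (b : HilbertBasis ℕ ℂ H) (A : H →L[ℂ] H) :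
    sHS b (adjoint A) = sHS b A := by
  have key : ∀ (B : H →L[ℂ] H), sHS b B = ∑' k, ∑' j, (‖⟪b j, B (b k)⟫‖₊ : ℝ≥0∞) ^ 2 := by
    intro B
    exact tsum_congr fun k => parseval b (B (b k))
  rw [key, key A, ENNReal.tsum_comm]
  congr 1; ext j; congr 1; ext k
  congr 2
  rw [← adjoint_inner_left A (b j) (b k), ← inner_conj_symm (adjoint A (b k)) (b j),
    RCLike.nnnorm_conj]

lemma ennreal_mul_le_sq_add_sq (a c : ℝ≥0∞) : a * c ≤ a ^ 2 + c ^ 2 := by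
  rcases le_total a c with h | h
  · calc a * c ≤ c * c := mul_le_mul_left h c
      _ = c ^ 2 := (sq c).symm
      _ ≤ a ^ 2 + c ^ 2 := le_add_self
  · calc a * c ≤ a * a := mul_le_mul_right h a
      _ = a ^ 2 := (sq a).symm
      _ ≤ a ^ 2 + c ^ 2 := le_self_add


lemma traceNorm_comp_le (b : HilbertBasis ℕ ℂ H) (C D : H →L[ℂ] H) :
    traceNorm (C ∘L D) ≤ sHS b C + sHS b (adjoint D) := by
  refine iSup_le fun m => iSup_le fun e => iSup_le fun f => iSup_le fun he => iSup_le fun hf => ?_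
  calc ∑ i, (‖⟪e i, (C ∘L D) (f i)⟫‖₊ : ℝ≥0∞)
      ≤ ∑ i, ((‖(adjoint C) (e i)‖₊ : ℝ≥0∞) ^ 2 + (‖D (f i)‖₊ : ℝ≥0∞) ^ 2) := by
        refine Finset.sum_le_sum fun i _ => ?_
        simp only [ContinuousLinearMap.comp_apply]
        rw [← adjoint_inner_left C (D (f i)) (e i)]
        calc (‖⟪adjoint C (e i), D (f i)⟫‖₊ : ℝ≥0∞)
            ≤ (‖adjoint C (e i)‖₊ : ℝ≥0∞) * (‖D (f i)‖₊ : ℝ≥0∞) := by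
              exact_mod_cast ENNReal.coe_le_coe.mpr (nnnorm_inner_le_nnnorm _ _)
          _ ≤ _ := ennreal_mul_le_sq_add_sq _ _
    _ = (∑ i, (‖(adjoint C) (e i)‖₊ : ℝ≥0∞) ^ 2) + ∑ i, (‖D (f i)‖₊ : ℝ≥0∞) ^ 2 :=
        Finset.sum_add_distrib
    _ ≤ sHS b (adjoint (adjoint C)) + sHS b (adjoint D) :=
        add_le_add (sum_sq_le b (adjoint C) he) (sum_sq_le b D hf)
    _ = _ := by rw [adjoint_adjoint]

lemma sHS_ne_top (b : HilbertBasis ℕ ℂ H) (A : H →L[ℂ] H)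
    (h : Summable fun i : ℕ => ‖A (b i)‖ ^ 2) : sHS b A ≠ ⊤ := by
  have h' : Summable fun i : ℕ => (‖A (b i)‖₊ ^ 2 : ℝ≥0) := by
    rw [← NNReal.summable_coe]
    simpa only [NNReal.coe_pow, coe_nnnorm] using h
  have h2 := ENNReal.tsum_coe_ne_top_iff_summable.mpr h'
  unfold sHS
  simpa [ENNReal.coe_pow] using h2

lemma tsum_sHS_le (b : HilbertBasis ℕ ℂ H) (chi : ℕ → (H →L[ℂ] H)) (A : H →L[ℂ] H)
    (hproj : ∀ g : H, ∑' n, (‖chi n g‖₊ : ℝ≥0∞) ^ 2 ≤ (‖g‖₊ : ℝ≥0∞) ^ 2) :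
    ∑' n, sHS b (chi n ∘L A) ≤ sHS b A := by
  unfold sHS
  simp only [ContinuousLinearMap.comp_apply]
  rw [ENNReal.tsum_comm]
  exact ENNReal.tsum_le_tsum fun j => hproj (A (b j))

end IxiAux

section LpPart

open IxiAux

variable {E : Type*} [MeasurableSpace E] {μ : Measure E}

lemma nnnorm_sq_eq_lintegral (f : Lp ℂ 2 μ) :
    (‖f‖₊ : ℝ≥0∞) ^ 2 = ∫⁻ a, (‖f a‖₊ : ℝ≥0∞) ^ 2 ∂μ := by
  have h1 : ((‖f‖₊ : ℝ≥0∞)) = eLpNorm f 2 μ := by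
    rw [Lp.nnnorm_def, ENNReal.coe_toNNReal (Lp.eLpNorm_ne_top f)]
  rw [h1, eLpNorm_eq_lintegral_rpow_enorm_toReal (p := 2) (by norm_num) (by norm_num)]
  rw [ENNReal.toReal_ofNat, ← ENNReal.rpow_natCast _ 2, ← ENNReal.rpow_mul]
  norm_num
  rfl

end LpPart

end Aux


/-- The class `𝓘_ξ(E,μ)` is closed under operator composition, i.e. it is an algebra. -/
theorem memIxi_comp {E : Type*} [MetricSpace E] [MeasurableSpace E] (μ : Measure E)
    (b : HilbertBasis ℕ ℂ (Lp ℂ 2 μ))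
    (En : ℕ → Set E) (hmeas : ∀ n, MeasurableSet (En n))
    (hbdd : ∀ n, Bornology.IsBounded (En n))
    (hdisj : Pairwise (Function.onFun Disjoint En)) (hcover : ⋃ n, En n = Set.univ)
    (chi : ℕ → (Lp ℂ 2 μ →L[ℂ] Lp ℂ 2 μ))
    (hchi : ∀ n, ∀ f : Lp ℂ 2 μ, (chi n f : E → ℂ) =ᵐ[μ] (En n).indicator f)
    (K₁ K₂ : Lp ℂ 2 μ →L[ℂ] Lp ℂ 2 μ)
    (h₁ : memIxi b chi K₁) (h₂ : memIxi b chi K₂) :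
    memIxi b chi (K₁ ∘L K₂) := by
  classical
  have hchiadj : ∀ n, ContinuousLinearMap.adjoint (chi n) = chi n := by
    intro n
    refine ((ContinuousLinearMap.eq_adjoint_iff (chi n) (chi n)).mpr fun x y => ?_).symm
    rw [MeasureTheory.L2.inner_def, MeasureTheory.L2.inner_def]
    refine integral_congr_ae ?_
    filter_upwards [hchi n x, hchi n y] with a hx hy
    rw [hx, hy]
    by_cases h : a ∈ En n
    · simp [Set.indicator_of_mem h]
    · simp [Set.indicator_of_notMem h]
  have hproj : ∀ g : Lp ℂ 2 μ, ∑' n, (‖chi n g‖₊ : ℝ≥0∞) ^ 2 ≤ (‖g‖₊ : ℝ≥0∞) ^ 2 := by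
    intro g
    have heq : ∀ n, ((‖chi n g‖₊ : ℝ≥0∞)) ^ 2 = ∫⁻ a in En n, (‖g a‖₊ : ℝ≥0∞) ^ 2 ∂μ := by
      intro n
      rw [nnnorm_sq_eq_lintegral, ← lintegral_indicator (hmeas n)]
      refine lintegral_congr_ae ?_
      filter_upwards [hchi n g] with a ha
      rw [ha]
      by_cases h : a ∈ En n
      · simp [Set.indicator_of_mem h]
      · simp [Set.indicator_of_notMem h]
    refine le_of_eq ?_
    calc ∑' n, ((‖chi n g‖₊ : ℝ≥0∞)) ^ 2
        = ∑' n, ∫⁻ a in En n, (‖g a‖₊ : ℝ≥0∞) ^ 2 ∂μ := tsum_congr heq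
      _ = ∫⁻ a in ⋃ n, En n, (‖g a‖₊ : ℝ≥0∞) ^ 2 ∂μ := (lintegral_iUnion hmeas hdisj _).symm
      _ = (‖g‖₊ : ℝ≥0∞) ^ 2 := by
          rw [hcover, Measure.restrict_univ, nnnorm_sq_eq_lintegral]
  refine ⟨?_, ?_⟩
  · show Summable fun i : ℕ => ‖(K₁ ∘L K₂) (b i)‖ ^ 2
    refine Summable.of_nonneg_of_le (fun i => sq_nonneg _) (fun i => ?_)
      (h₂.1.mul_left (‖K₁‖ ^ 2))
    calc ‖(K₁ ∘L K₂) (b i)‖ ^ 2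
        ≤ (‖K₁‖ * ‖K₂ (b i)‖) ^ 2 := by
          apply pow_le_pow_left₀ (norm_nonneg _) (K₁.le_opNorm _)
      _ = ‖K₁‖ ^ 2 * ‖K₂ (b i)‖ ^ 2 := mul_pow _ _ _
  · have key : ∀ n, traceNorm (chi n ∘L (K₁ ∘L K₂) ∘L chi n)
        ≤ IxiAux.sHS b (chi n ∘L K₁)
          + IxiAux.sHS b (chi n ∘L ContinuousLinearMap.adjoint K₂) := by
      intro n
      have hco : chi n ∘L (K₁ ∘L K₂) ∘L chi n = (chi n ∘L K₁) ∘L (K₂ ∘L chi n) := by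
        ext x; rfl
      rw [hco]
      have h := IxiAux.traceNorm_comp_le b (chi n ∘L K₁) (K₂ ∘L chi n)
      rwa [ContinuousLinearMap.adjoint_comp, hchiadj n] at h
    calc ∑' n, traceNorm (chi n ∘L (K₁ ∘L K₂) ∘L chi n)
        ≤ ∑' n, (IxiAux.sHS b (chi n ∘L K₁)
            + IxiAux.sHS b (chi n ∘L ContinuousLinearMap.adjoint K₂)) :=
          ENNReal.tsum_le_tsum key
      _ = (∑' n, IxiAux.sHS b (chi n ∘L K₁))
            + ∑' n, IxiAux.sHS b (chi n ∘L ContinuousLinearMap.adjoint K₂) := ENNReal.tsum_add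
      _ ≤ IxiAux.sHS b K₁ + IxiAux.sHS b (ContinuousLinearMap.adjoint K₂) :=
          add_le_add (IxiAux.tsum_sHS_le b chi K₁ hproj)
            (IxiAux.tsum_sHS_le b chi (ContinuousLinearMap.adjoint K₂) hproj)
      _ < ⊤ := by
          rw [IxiAux.sHS_adjoint]
          exact ENNReal.add_lt_top.mpr ⟨lt_top_iff_ne_top.mpr (IxiAux.sHS_ne_top b K₁ h₁.1),
            lt_top_iff_ne_top.mpr (IxiAux.sHS_ne_top b K₂ h₂.1)⟩
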